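/- arXiv:1802.04473 — 2 statements merged into one kernel-verified Lean document; each statement's English description precedes it below -/
import Mathlib

section
/- (Information entropy increases through the CP-model.) Let X_1, …, X_N, Z, D_1, …, D_N be random variables on a probability space taking values in finite sets. Assume (i) X_1, …, X_N are mutually conditionally independent given Z, and (ii) for each i, X_i and Z are conditionally independent given D_i. Then the entropy of the joint variable X = (X_1,…,X_N) satisfies H(X) ≥ Σ_{i=1}^N H(X_i | D_i). -/
open MeasureTheory

/-- Probability of an event, as a real number. -/
noncomputable def pr {Ω : Type*} [MeasurableSpace Ω] (μ : Measure Ω) (s : Set Ω) : ℝ :=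
  (μ s).toReal

/-- Shannon entropy `H(X) = -Σ_x P(X=x) log P(X=x)` of a random variable valued in a
finite set (natural log; `0 log 0 = 0` since `Real.log 0 = 0`). -/
noncomputable def entropy {Ω A : Type*} [MeasurableSpace Ω] [Fintype A]
    (μ : Measure Ω) (X : Ω → A) : ℝ :=
  -∑ x : A, pr μ {ω | X ω = x} * Real.log (pr μ {ω | X ω = x})

/-- Conditional entropy `H(X|Y) = Σ_y P(Y=y) · (-Σ_x P(X=x|Y=y) log P(X=x|Y=y))`. -/
noncomputable def condEntropy {Ω A B : Type*} [MeasurableSpace Ω] [Fintype A] [Fintype B]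
    (μ : Measure Ω) (X : Ω → A) (Y : Ω → B) : ℝ :=
  ∑ y : B, pr μ {ω | Y ω = y} *
    (-∑ x : A, (pr μ {ω | X ω = x ∧ Y ω = y} / pr μ {ω | Y ω = y}) *
      Real.log (pr μ {ω | X ω = x ∧ Y ω = y} / pr μ {ω | Y ω = y}))

section cpAux

lemma cp_pr_nonneg {Ω : Type*} [MeasurableSpace Ω] (μ : Measure Ω) (s : Set Ω) : 0 ≤ pr μ s :=
  ENNReal.toReal_nonneg

lemma cp_pr_mono {Ω : Type*} [MeasurableSpace Ω] (μ : Measure Ω) [IsFiniteMeasure μ]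
    {s t : Set Ω} (h : s ⊆ t) : pr μ s ≤ pr μ t :=
  ENNReal.toReal_mono (measure_ne_top μ t) (measure_mono h)

lemma cp_pr_univ {Ω : Type*} [MeasurableSpace Ω] (μ : Measure Ω) [IsProbabilityMeasure μ] :
    pr μ Set.univ = 1 := by simp [pr]

lemma cp_pr_fiber {Ω B : Type*} [MeasurableSpace Ω] [Fintype B] (μ : Measure Ω)
    [IsFiniteMeasure μ]
    (Y : Ω → B) (hY : ∀ b, MeasurableSet {ω | Y ω = b}) {s : Set Ω} (hs : MeasurableSet s) :
    pr μ s = ∑ b, pr μ (s ∩ {ω | Y ω = b}) := by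
  have hU : s = ⋃ b, s ∩ {ω | Y ω = b} := by
    ext ω; simp
  have hdisj : Pairwise (Function.onFun Disjoint fun b => s ∩ {ω | Y ω = b}) := by
    intro b b' hbb'
    refine Set.disjoint_left.mpr fun ω hω hω' => hbb' ?_
    exact hω.2.symm.trans hω'.2
  have hmeas : ∀ b, MeasurableSet (s ∩ {ω | Y ω = b}) := fun b => hs.inter (hY b)
  have h1 : μ s = ∑ b, μ (s ∩ {ω | Y ω = b}) := by
    conv_lhs => rw [hU]
    rw [measure_iUnion hdisj hmeas, tsum_fintype]
  rw [pr, h1, ENNReal.toReal_sum fun b _ => measure_ne_top μ _]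
  rfl

lemma cp_gibbs {a b : ℝ} (ha : 0 ≤ a) (hb : 0 ≤ b) (hab : 0 < a → 0 < b) :
    a - b ≤ a * Real.log (a / b) := by
  rcases ha.eq_or_lt with h | h
  · rw [← h, zero_mul, zero_sub]; exact neg_nonpos.mpr hb
  · have hb' := hab h
    have h1 : Real.log (b / a) ≤ b / a - 1 := Real.log_le_sub_one_of_pos (by positivity)
    have h2 : Real.log (a / b) = -Real.log (b / a) := by
      rw [← Real.log_inv]; congr 1; field_simp
    have h3 := mul_le_mul_of_nonneg_left h1 h.le
    have h4 : a * (b / a - 1) = b - a := by field_simp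
    rw [h2, mul_neg]; linarith

lemma cp_lemA {S T : Type*} [Fintype S] [Fintype T]
    (f : S → T → ℝ) (g : S → ℝ) (h : T → ℝ)
    (hf : ∀ s t, 0 ≤ f s t)
    (hg : ∀ s, g s = ∑ t, f s t)
    (hh : ∀ t, h t = ∑ s, f s t)
    (htot : ∑ s, g s = 1) :
    -∑ s, ∑ t, f s t * Real.log (f s t / h t) ≤ -∑ s, g s * Real.log (g s) := by
  have hg0 : ∀ s, 0 ≤ g s := fun s => (hg s) ▸ Finset.sum_nonneg fun t _ => hf s t
  have hh0 : ∀ t, 0 ≤ h t := fun t => (hh t) ▸ Finset.sum_nonneg fun s _ => hf s t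
  have hfg : ∀ s t, f s t ≤ g s := fun s t =>
    (hg s) ▸ Finset.single_le_sum (fun t _ => hf s t) (Finset.mem_univ t)
  have hfh : ∀ s t, f s t ≤ h t := fun s t =>
    (hh t) ▸ Finset.single_le_sum (fun s _ => hf s t) (Finset.mem_univ s)
  have key : ∀ s t, f s t - g s * h t ≤
      f s t * Real.log (f s t / h t) - f s t * Real.log (g s) := by
    intro s t
    rcases (hf s t).eq_or_lt with h0 | h0
    · rw [← h0]
      simp only [zero_mul, zero_sub, sub_zero, sub_self]
      have := mul_nonneg (hg0 s) (hh0 t)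
      linarith
    · have hgs : 0 < g s := lt_of_lt_of_le h0 (hfg s t)
      have hht : 0 < h t := lt_of_lt_of_le h0 (hfh s t)
      have e : f s t * Real.log (f s t / h t) - f s t * Real.log (g s)
          = f s t * Real.log (f s t / (g s * h t)) := by
        rw [← mul_sub]
        congr 1
        rw [← Real.log_div (by positivity) (ne_of_gt hgs)]
        congr 1
        rw [div_div, mul_comm (h t) (g s)]
      rw [e]
      exact cp_gibbs h0.le (by positivity) fun _ => by positivity
  have hH : ∑ t, h t = 1 := by
    calc ∑ t, h t = ∑ t, ∑ s, f s t := by simp_rw [hh]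
    _ = ∑ s, ∑ t, f s t := Finset.sum_comm
    _ = ∑ s, g s := by simp_rw [hg]
    _ = 1 := htot
  have H := Finset.sum_le_sum fun s (_ : s ∈ Finset.univ) =>
    Finset.sum_le_sum fun t (_ : t ∈ Finset.univ) => key s t
  have e1 : ∑ s, ∑ t, (f s t - g s * h t) = 0 := by
    have : ∀ s, ∑ t, (f s t - g s * h t) = 0 := by
      intro s
      rw [Finset.sum_sub_distrib, ← hg s, ← Finset.mul_sum, hH, mul_one, sub_self]
    simp_rw [this, Finset.sum_const_zero]
  have e2 : ∑ s, ∑ t, (f s t * Real.log (f s t / h t) - f s t * Real.log (g s))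
      = (∑ s, ∑ t, f s t * Real.log (f s t / h t)) - ∑ s, g s * Real.log (g s) := by
    rw [← Finset.sum_sub_distrib]
    refine Finset.sum_congr rfl fun s _ => ?_
    rw [Finset.sum_sub_distrib, ← Finset.sum_mul, ← hg s]
  rw [e1, e2] at H
  linarith

lemma cp_lemB {S T U : Type*} [Fintype S] [Fintype T] [Fintype U]
    (f : S → T → U → ℝ) (fSU : S → U → ℝ) (fU : U → ℝ) (fST : S → T → ℝ)
    (fT : T → ℝ) (fTU : T → U → ℝ)
    (hf : ∀ s t u, 0 ≤ f s t u)
    (hSU : ∀ s u, fSU s u = ∑ t, f s t u)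
    (hU : ∀ u, fU u = ∑ s, ∑ t, f s t u)
    (hST : ∀ s t, fST s t = ∑ u, f s t u)
    (hT : ∀ t, fT t = ∑ s, ∑ u, f s t u)
    (hTU : ∀ t u, fTU t u = ∑ s, f s t u)
    (htot : ∑ t, fT t = 1)
    (hMar : ∀ s t u, f s t u * fU u = fSU s u * fTU t u) :
    -∑ s, ∑ u, fSU s u * Real.log (fSU s u / fU u) ≤
      -∑ s, ∑ t, fST s t * Real.log (fST s t / fT t) := by
  have hSU0 : ∀ s u, 0 ≤ fSU s u := fun s u =>
    (hSU s u) ▸ Finset.sum_nonneg fun t _ => hf s t u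
  have hU0 : ∀ u, 0 ≤ fU u := fun u =>
    (hU u) ▸ Finset.sum_nonneg fun s _ => Finset.sum_nonneg fun t _ => hf s t u
  have hST0 : ∀ s t, 0 ≤ fST s t := fun s t =>
    (hST s t) ▸ Finset.sum_nonneg fun u _ => hf s t u
  have hT0 : ∀ t, 0 ≤ fT t := fun t =>
    (hT t) ▸ Finset.sum_nonneg fun s _ => Finset.sum_nonneg fun u _ => hf s t u
  have hTU0 : ∀ t u, 0 ≤ fTU t u := fun t u =>
    (hTU t u) ▸ Finset.sum_nonneg fun s _ => hf s t u
  have hfSU : ∀ s t u, f s t u ≤ fSU s u := fun s t u =>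
    (hSU s u) ▸ Finset.single_le_sum (fun t _ => hf s t u) (Finset.mem_univ t)
  have hfST : ∀ s t u, f s t u ≤ fST s t := fun s t u =>
    (hST s t) ▸ Finset.single_le_sum (fun u _ => hf s t u) (Finset.mem_univ u)
  have hfTU : ∀ s t u, f s t u ≤ fTU t u := fun s t u =>
    (hTU t u) ▸ Finset.single_le_sum (fun s _ => hf s t u) (Finset.mem_univ s)
  have hfU : ∀ s t u, f s t u ≤ fU u := fun s t u => by
    rw [hU u]
    calc f s t u ≤ ∑ t, f s t u :=
      Finset.single_le_sum (fun t _ => hf s t u) (Finset.mem_univ t)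
    _ ≤ ∑ s, ∑ t, f s t u :=
      Finset.single_le_sum (f := fun s => ∑ t, f s t u)
        (fun s _ => Finset.sum_nonneg fun t _ => hf s t u) (Finset.mem_univ s)
  have hfT : ∀ s t u, f s t u ≤ fT t := fun s t u => by
    rw [hT t]
    calc f s t u ≤ ∑ u, f s t u :=
      Finset.single_le_sum (fun u _ => hf s t u) (Finset.mem_univ u)
    _ ≤ ∑ s, ∑ u, f s t u :=
      Finset.single_le_sum (f := fun s => ∑ u, f s t u)
        (fun s _ => Finset.sum_nonneg fun u _ => hf s t u) (Finset.mem_univ s)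
  have key : ∀ s t u, f s t u - fTU t u * fST s t / fT t ≤
      f s t u * Real.log (fSU s u / fU u) - f s t u * Real.log (fST s t / fT t) := by
    intro s t u
    rcases (hf s t u).eq_or_lt with h0 | h0
    · rw [← h0]
      simp only [zero_mul, zero_sub, sub_self]
      have : 0 ≤ fTU t u * fST s t / fT t :=
        div_nonneg (mul_nonneg (hTU0 t u) (hST0 s t)) (hT0 t)
      linarith
    · have h1 : 0 < fSU s u := lt_of_lt_of_le h0 (hfSU s t u)
      have h2 : 0 < fU u := lt_of_lt_of_le h0 (hfU s t u)
      have h3 : 0 < fST s t := lt_of_lt_of_le h0 (hfST s t u)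
      have h4 : 0 < fT t := lt_of_lt_of_le h0 (hfT s t u)
      have h5 : 0 < fTU t u := lt_of_lt_of_le h0 (hfTU s t u)
      have e : f s t u * Real.log (fSU s u / fU u) - f s t u * Real.log (fST s t / fT t)
          = f s t u * Real.log ((fSU s u * fT t) / (fU u * fST s t)) := by
        rw [← mul_sub]
        congr 1
        rw [Real.log_div (ne_of_gt h1) (ne_of_gt h2), Real.log_div (ne_of_gt h3) (ne_of_gt h4),
          Real.log_div (by positivity) (by positivity),
          Real.log_mul (ne_of_gt h1) (ne_of_gt h4), Real.log_mul (ne_of_gt h2) (ne_of_gt h3)]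
        ring
      have e2 : (fSU s u * fT t) / (fU u * fST s t)
          = f s t u / (fTU t u * fST s t / fT t) := by
        rw [div_div_eq_mul_div]
        rw [div_eq_div_iff (by positivity) (by positivity)]
        linear_combination (-(fT t * fST s t)) * hMar s t u
      rw [e, e2]
      exact cp_gibbs h0.le (by positivity) fun _ => by positivity
  have A1 : ∑ s, ∑ u, fSU s u * Real.log (fSU s u / fU u)
      = ∑ s, ∑ t, ∑ u, f s t u * Real.log (fSU s u / fU u) := by
    refine Finset.sum_congr rfl fun s _ => ?_
    calc ∑ u, fSU s u * Real.log (fSU s u / fU u)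
        = ∑ u, ∑ t, f s t u * Real.log (fSU s u / fU u) := by
          refine Finset.sum_congr rfl fun u _ => ?_
          rw [hSU, Finset.sum_mul]
    _ = ∑ t, ∑ u, f s t u * Real.log (fSU s u / fU u) := Finset.sum_comm
  have A2 : ∑ s, ∑ t, fST s t * Real.log (fST s t / fT t)
      = ∑ s, ∑ t, ∑ u, f s t u * Real.log (fST s t / fT t) := by
    refine Finset.sum_congr rfl fun s _ => Finset.sum_congr rfl fun t _ => ?_
    rw [hST, Finset.sum_mul]
  have hTt : ∀ t, fT t = ∑ u, fTU t u := by
    intro t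
    rw [hT t, Finset.sum_comm]
    exact Finset.sum_congr rfl fun u _ => (hTU t u).symm
  have hb1 : ∀ t u, ∑ s, fTU t u * fST s t / fT t = fTU t u := by
    intro t u
    rw [← Finset.sum_div, ← Finset.mul_sum]
    have hs : ∑ s, fST s t = fT t := by
      rw [hT t]
      exact Finset.sum_congr rfl fun s _ => hST s t
    rw [hs]
    rcases (hT0 t).eq_or_lt with h0 | h0
    · have hzero : fTU t u = 0 := by
        have h1 : fTU t u ≤ fT t :=
          (hTt t) ▸ Finset.single_le_sum (fun u _ => hTU0 t u) (Finset.mem_univ u)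
        have := hTU0 t u
        linarith [h1.trans_eq h0.symm]
      rw [hzero, zero_mul, zero_div]
    · field_simp
  have hf1 : ∑ s, ∑ t, ∑ u, f s t u = 1 := by
    calc ∑ s, ∑ t, ∑ u, f s t u = ∑ t, ∑ s, ∑ u, f s t u := Finset.sum_comm
    _ = ∑ t, fT t := Finset.sum_congr rfl fun t _ => (hT t).symm
    _ = 1 := htot
  have hb2 : ∑ s, ∑ t, ∑ u, fTU t u * fST s t / fT t = 1 := by
    calc ∑ s, ∑ t, ∑ u, fTU t u * fST s t / fT t
        = ∑ t, ∑ s, ∑ u, fTU t u * fST s t / fT t := Finset.sum_comm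
    _ = ∑ t, ∑ u, ∑ s, fTU t u * fST s t / fT t :=
        Finset.sum_congr rfl fun t _ => Finset.sum_comm
    _ = ∑ t, ∑ u, fTU t u :=
        Finset.sum_congr rfl fun t _ => Finset.sum_congr rfl fun u _ => hb1 t u
    _ = ∑ t, fT t := Finset.sum_congr rfl fun t _ => (hTt t).symm
    _ = 1 := htot
  have H := Finset.sum_le_sum fun s (_ : s ∈ Finset.univ) =>
    Finset.sum_le_sum fun t (_ : t ∈ Finset.univ) =>
      Finset.sum_le_sum fun u (_ : u ∈ Finset.univ) => key s t u
  simp only [Finset.sum_sub_distrib] at H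
  rw [hf1, hb2] at H
  rw [A1, A2]
  linarith

lemma cp_lemC {N : ℕ} (A : Fin N → Type*) [∀ i, Fintype (A i)] {E : Type*} [Fintype E]
    (f : (∀ i, A i) → E → ℝ) (g : E → ℝ) (m : ∀ i, A i → E → ℝ)
    (hf : ∀ x z, 0 ≤ f x z)
    (hfg : ∀ x z, f x z ≤ g z)
    (hfm : ∀ x z i, f x z ≤ m i (x i) z)
    (hm : ∀ i (z : E) (φ : A i → ℝ), ∑ xi, m i xi z * φ xi = ∑ x, f x z * φ (x i))
    (hfac : ∀ x z, 0 < g z → f x z / g z = ∏ i, (m i (x i) z / g z)) :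
    ∑ i, (-∑ xi, ∑ z, m i xi z * Real.log (m i xi z / g z)) =
      -∑ x, ∑ z, f x z * Real.log (f x z / g z) := by
  have step1 : ∀ i, ∑ xi, ∑ z, m i xi z * Real.log (m i xi z / g z)
      = ∑ x, ∑ z, f x z * Real.log (m i (x i) z / g z) := by
    intro i
    calc ∑ xi, ∑ z, m i xi z * Real.log (m i xi z / g z)
        = ∑ z, ∑ xi, m i xi z * Real.log (m i xi z / g z) := Finset.sum_comm
    _ = ∑ z, ∑ x, f x z * Real.log (m i (x i) z / g z) :=
        Finset.sum_congr rfl fun z _ => hm i z fun xi => Real.log (m i xi z / g z)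
    _ = ∑ x, ∑ z, f x z * Real.log (m i (x i) z / g z) := Finset.sum_comm
  calc ∑ i, (-∑ xi, ∑ z, m i xi z * Real.log (m i xi z / g z))
      = -∑ i, ∑ x, ∑ z, f x z * Real.log (m i (x i) z / g z) := by
        rw [← Finset.sum_neg_distrib]
        exact Finset.sum_congr rfl fun i _ => by rw [step1 i]
  _ = -∑ x, ∑ z, ∑ i, f x z * Real.log (m i (x i) z / g z) := by
        congr 1
        rw [Finset.sum_comm]
        exact Finset.sum_congr rfl fun x _ => Finset.sum_comm
  _ = -∑ x, ∑ z, f x z * Real.log (f x z / g z) := by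
        congr 1
        refine Finset.sum_congr rfl fun x _ => Finset.sum_congr rfl fun z _ => ?_
        rw [← Finset.mul_sum]
        rcases (hf x z).eq_or_lt with h0 | h0
        · rw [← h0, zero_mul, zero_mul]
        · have hgz : 0 < g z := lt_of_lt_of_le h0 (hfg x z)
          congr 1
          rw [← Real.log_prod fun i _ => ?_, ← hfac x z hgz]
          have : 0 < m i (x i) z := lt_of_lt_of_le h0 (hfm x z i)
          positivity

end cpAux

set_option maxHeartbeats 4000000 in
/-- Information entropy increases through the CP-model. If `X_1, …, X_N` are
mutually conditionally independent given `Z`, and each `X_i` is conditionally independent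
of `Z` given `D_i`, then `H((X_1,…,X_N)) ≥ Σ_i H(X_i | D_i)`. -/
theorem cp_model_entropy_increases {Ω : Type*} [MeasurableSpace Ω]
    (μ : Measure Ω) [IsProbabilityMeasure μ]
    (N : ℕ) (hN : 0 < N)
    (A : Fin N → Type*) [∀ i, Fintype (A i)]
    [∀ i, MeasurableSpace (A i)] [∀ i, MeasurableSingletonClass (A i)]
    (B : Fin N → Type*) [∀ i, Fintype (B i)]
    [∀ i, MeasurableSpace (B i)] [∀ i, MeasurableSingletonClass (B i)]
    {E : Type*} [Fintype E] [MeasurableSpace E] [MeasurableSingletonClass E]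
    (X : ∀ i, Ω → A i) (D : ∀ i, Ω → B i) (Z : Ω → E)
    (hX : ∀ i, Measurable (X i)) (hD : ∀ i, Measurable (D i)) (hZ : Measurable Z)
    (hmutual : ∀ (z : E), 0 < pr μ {ω | Z ω = z} → ∀ x : ∀ i, A i,
      pr μ {ω | (∀ i, X i ω = x i) ∧ Z ω = z} / pr μ {ω | Z ω = z} =
        ∏ i, (pr μ {ω | X i ω = x i ∧ Z ω = z} / pr μ {ω | Z ω = z}))
    (hmarkov : ∀ i, ∀ (xi : A i) (d : B i) (z : E), 0 < pr μ {ω | D i ω = d} →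
      pr μ {ω | (X i ω = xi ∧ Z ω = z) ∧ D i ω = d} / pr μ {ω | D i ω = d} =
        (pr μ {ω | X i ω = xi ∧ D i ω = d} / pr μ {ω | D i ω = d}) *
        (pr μ {ω | Z ω = z ∧ D i ω = d} / pr μ {ω | D i ω = d})) :
    ∑ i, condEntropy μ (X i) (D i) ≤ entropy μ (fun ω => fun i => X i ω) := by
  classical
  -- measurability facts
  have hmX : ∀ i (x : A i), MeasurableSet {ω | X i ω = x} :=
    fun i x => hX i (measurableSet_singleton x)
  have hmD : ∀ i (d : B i), MeasurableSet {ω | D i ω = d} :=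
    fun i d => hD i (measurableSet_singleton d)
  have hmZ : ∀ z, MeasurableSet {ω | Z ω = z} := fun z => hZ (measurableSet_singleton z)
  have hmV : ∀ (x : ∀ i, A i), MeasurableSet {ω | (fun i => X i ω) = x} := by
    intro x
    have hset : {ω | (fun i => X i ω) = x} = ⋂ i, {ω | X i ω = x i} := by
      ext ω; simp [funext_iff]
    rw [hset]
    exact MeasurableSet.iInter fun i => hmX i (x i)
  have hmV' : ∀ (x : ∀ i, A i), MeasurableSet {ω | ∀ i, X i ω = x i} := by
    intro x
    have hset : {ω | ∀ i, X i ω = x i} = ⋂ i, {ω | X i ω = x i} := by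
      ext ω; simp
    rw [hset]
    exact MeasurableSet.iInter fun i => hmX i (x i)
  have hmXZ : ∀ i (x : A i) (z : E), MeasurableSet {ω | X i ω = x ∧ Z ω = z} :=
    fun i x z => (hmX i x).inter (hmZ z)
  have hmXD : ∀ i (x : A i) (d : B i), MeasurableSet {ω | X i ω = x ∧ D i ω = d} :=
    fun i x d => (hmX i x).inter (hmD i d)
  have hmZD : ∀ i (z : E) (d : B i), MeasurableSet {ω | Z ω = z ∧ D i ω = d} :=
    fun i z d => (hmZ z).inter (hmD i d)
  have hmVZ : ∀ (x : ∀ i, A i) (z : E), MeasurableSet {ω | (∀ i, X i ω = x i) ∧ Z ω = z} :=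
    fun x z => (hmV' x).inter (hmZ z)
  have prcongr : ∀ s t : Set Ω, s = t → pr μ s = pr μ t := fun s t h => by rw [h]
  -- Step 1: rewrite condEntropy
  have hcond : ∀ i, condEntropy μ (X i) (D i)
      = -∑ x : A i, ∑ d : B i, pr μ {ω | X i ω = x ∧ D i ω = d} *
          Real.log (pr μ {ω | X i ω = x ∧ D i ω = d} / pr μ {ω | D i ω = d}) := by
    intro i
    have h1 : ∀ (d : B i) (x : A i), pr μ {ω | D i ω = d} *
        ((pr μ {ω | X i ω = x ∧ D i ω = d} / pr μ {ω | D i ω = d}) *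
          Real.log (pr μ {ω | X i ω = x ∧ D i ω = d} / pr μ {ω | D i ω = d}))
        = pr μ {ω | X i ω = x ∧ D i ω = d} *
          Real.log (pr μ {ω | X i ω = x ∧ D i ω = d} / pr μ {ω | D i ω = d}) := by
      intro d x
      rcases (cp_pr_nonneg μ {ω | D i ω = d}).eq_or_lt with h0 | h0
      · have hmono : pr μ {ω | X i ω = x ∧ D i ω = d} ≤ pr μ {ω | D i ω = d} :=
          cp_pr_mono μ fun ω h => h.2
        have h2 := cp_pr_nonneg μ {ω | X i ω = x ∧ D i ω = d}
        have hz : pr μ {ω | X i ω = x ∧ D i ω = d} = 0 := by linarith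
        rw [hz, ← h0, zero_mul, zero_mul]
      · have hne := ne_of_gt h0
        have h2 : pr μ {ω | D i ω = d} *
            (pr μ {ω | X i ω = x ∧ D i ω = d} / pr μ {ω | D i ω = d})
            = pr μ {ω | X i ω = x ∧ D i ω = d} := by field_simp
        rw [← mul_assoc, h2]
    rw [condEntropy]
    simp only [mul_neg, Finset.mul_sum]
    rw [Finset.sum_neg_distrib, Finset.sum_comm]
    congr 1
    exact Finset.sum_congr rfl fun x _ => Finset.sum_congr rfl fun d _ => h1 d x
  -- Step 2: per-i inequality (data processing via Markov)
  have stepB : ∀ i,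
      -∑ x : A i, ∑ d : B i, pr μ {ω | X i ω = x ∧ D i ω = d} *
          Real.log (pr μ {ω | X i ω = x ∧ D i ω = d} / pr μ {ω | D i ω = d}) ≤
      -∑ x : A i, ∑ z : E, pr μ {ω | X i ω = x ∧ Z ω = z} *
          Real.log (pr μ {ω | X i ω = x ∧ Z ω = z} / pr μ {ω | Z ω = z}) := by
    intro i
    have hSU : ∀ (x : A i) (d : B i), pr μ {ω | X i ω = x ∧ D i ω = d}
        = ∑ z : E, pr μ {ω | (X i ω = x ∧ Z ω = z) ∧ D i ω = d} := by
      intro x d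
      rw [cp_pr_fiber μ Z hmZ (hmXD i x d)]
      refine Finset.sum_congr rfl fun z _ => prcongr _ _ ?_
      ext ω
      simp only [Set.mem_inter_iff, Set.mem_setOf_eq] <;> tauto
    have hU : ∀ (d : B i), pr μ {ω | D i ω = d}
        = ∑ x : A i, ∑ z : E, pr μ {ω | (X i ω = x ∧ Z ω = z) ∧ D i ω = d} := by
      intro d
      rw [cp_pr_fiber μ (X i) (hmX i) (hmD i d)]
      refine Finset.sum_congr rfl fun x _ => ?_
      rw [cp_pr_fiber μ Z hmZ ((hmD i d).inter (hmX i x))]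
      refine Finset.sum_congr rfl fun z _ => prcongr _ _ ?_
      ext ω
      simp only [Set.mem_inter_iff, Set.mem_setOf_eq] <;> tauto
    have hST : ∀ (x : A i) (z : E), pr μ {ω | X i ω = x ∧ Z ω = z}
        = ∑ d : B i, pr μ {ω | (X i ω = x ∧ Z ω = z) ∧ D i ω = d} := by
      intro x z
      rw [cp_pr_fiber μ (D i) (hmD i) (hmXZ i x z)]
      refine Finset.sum_congr rfl fun d _ => prcongr _ _ ?_
      ext ω
      simp only [Set.mem_inter_iff, Set.mem_setOf_eq] <;> tauto
    have hT : ∀ (z : E), pr μ {ω | Z ω = z}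
        = ∑ x : A i, ∑ d : B i, pr μ {ω | (X i ω = x ∧ Z ω = z) ∧ D i ω = d} := by
      intro z
      rw [cp_pr_fiber μ (X i) (hmX i) (hmZ z)]
      refine Finset.sum_congr rfl fun x _ => ?_
      rw [cp_pr_fiber μ (D i) (hmD i) ((hmZ z).inter (hmX i x))]
      refine Finset.sum_congr rfl fun d _ => prcongr _ _ ?_
      ext ω
      simp only [Set.mem_inter_iff, Set.mem_setOf_eq] <;> tauto
    have hTU : ∀ (z : E) (d : B i), pr μ {ω | Z ω = z ∧ D i ω = d}
        = ∑ x : A i, pr μ {ω | (X i ω = x ∧ Z ω = z) ∧ D i ω = d} := by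
      intro z d
      rw [cp_pr_fiber μ (X i) (hmX i) (hmZD i z d)]
      refine Finset.sum_congr rfl fun x _ => prcongr _ _ ?_
      ext ω
      simp only [Set.mem_inter_iff, Set.mem_setOf_eq] <;> tauto
    have htot : ∑ z : E, pr μ {ω | Z ω = z} = 1 := by
      calc ∑ z : E, pr μ {ω | Z ω = z}
          = ∑ z : E, pr μ (Set.univ ∩ {ω | Z ω = z}) :=
            Finset.sum_congr rfl fun z _ => prcongr _ _ (by ext ω; simp)
      _ = pr μ Set.univ := (cp_pr_fiber μ Z hmZ MeasurableSet.univ).symm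
      _ = 1 := cp_pr_univ μ
    have hMar : ∀ (x : A i) (z : E) (d : B i),
        pr μ {ω | (X i ω = x ∧ Z ω = z) ∧ D i ω = d} * pr μ {ω | D i ω = d}
        = pr μ {ω | X i ω = x ∧ D i ω = d} * pr μ {ω | Z ω = z ∧ D i ω = d} := by
      intro x z d
      rcases (cp_pr_nonneg μ {ω | D i ω = d}).eq_or_lt with h0 | h0
      · have hm1 : pr μ {ω | (X i ω = x ∧ Z ω = z) ∧ D i ω = d} ≤ pr μ {ω | D i ω = d} :=
          cp_pr_mono μ fun ω h => h.2
        have hm2 : pr μ {ω | X i ω = x ∧ D i ω = d} ≤ pr μ {ω | D i ω = d} :=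
          cp_pr_mono μ fun ω h => h.2
        have hn1 := cp_pr_nonneg μ {ω | (X i ω = x ∧ Z ω = z) ∧ D i ω = d}
        have hn2 := cp_pr_nonneg μ {ω | X i ω = x ∧ D i ω = d}
        have hz1 : pr μ {ω | (X i ω = x ∧ Z ω = z) ∧ D i ω = d} = 0 := by linarith
        have hz2 : pr μ {ω | X i ω = x ∧ D i ω = d} = 0 := by linarith
        rw [hz1, hz2, zero_mul, zero_mul]
      · have e := hmarkov i x d z h0
        have hne := ne_of_gt h0
        field_simp at e
        apply mul_right_cancel₀ hne
        linear_combination (pr μ {ω | D i ω = d}) * e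
    exact cp_lemB (fun x z d => pr μ {ω | (X i ω = x ∧ Z ω = z) ∧ D i ω = d})
      (fun x d => pr μ {ω | X i ω = x ∧ D i ω = d})
      (fun d => pr μ {ω | D i ω = d})
      (fun x z => pr μ {ω | X i ω = x ∧ Z ω = z})
      (fun z => pr μ {ω | Z ω = z})
      (fun z d => pr μ {ω | Z ω = z ∧ D i ω = d})
      (fun x z d => cp_pr_nonneg μ _) hSU hU hST hT hTU htot
      (fun x z d => hMar x z d)
  -- Step 3: factorization into sum over i (uses mutual conditional independence)
  have stepC : ∑ i, (-∑ x : A i, ∑ z : E, pr μ {ω | X i ω = x ∧ Z ω = z} *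
        Real.log (pr μ {ω | X i ω = x ∧ Z ω = z} / pr μ {ω | Z ω = z}))
      = -∑ x : (∀ i, A i), ∑ z : E, pr μ {ω | (∀ i, X i ω = x i) ∧ Z ω = z} *
          Real.log (pr μ {ω | (∀ i, X i ω = x i) ∧ Z ω = z} / pr μ {ω | Z ω = z}) := by
    have hm : ∀ i (z : E) (φ : A i → ℝ),
        ∑ xi : A i, pr μ {ω | X i ω = xi ∧ Z ω = z} * φ xi
        = ∑ x : (∀ j, A j), pr μ {ω | (∀ j, X j ω = x j) ∧ Z ω = z} * φ (x i) := by
      intro i z φ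
      have hfib : ∀ (xi : A i), pr μ {ω | X i ω = xi ∧ Z ω = z}
          = ∑ x : (∀ j, A j), if x i = xi
              then pr μ {ω | (∀ j, X j ω = x j) ∧ Z ω = z} else 0 := by
        intro xi
        rw [cp_pr_fiber μ (fun ω => fun j => X j ω) hmV (hmXZ i xi z)]
        refine Finset.sum_congr rfl fun x _ => ?_
        by_cases hx : x i = xi
        · rw [if_pos hx]
          refine prcongr _ _ ?_
          ext ω
          simp only [Set.mem_inter_iff, Set.mem_setOf_eq, funext_iff]
          constructor
          · rintro ⟨⟨h1, h2⟩, h3⟩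
            exact ⟨h3, h2⟩
          · rintro ⟨h1, h2⟩
            exact ⟨⟨hx ▸ h1 i, h2⟩, h1⟩
        · rw [if_neg hx]
          have hempty : {ω | X i ω = xi ∧ Z ω = z} ∩ {ω | (fun j => X j ω) = x}
              = (∅ : Set Ω) := by
            ext ω
            simp only [Set.mem_inter_iff, Set.mem_setOf_eq, Set.mem_empty_iff_false,
              iff_false, not_and, funext_iff]
            intro h1 h2
            exact absurd ((h2 i).symm.trans h1.1) hx
          rw [hempty]
          simp [pr]
      calc ∑ xi : A i, pr μ {ω | X i ω = xi ∧ Z ω = z} * φ xi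
          = ∑ xi : A i, ∑ x : (∀ j, A j), (if x i = xi
              then pr μ {ω | (∀ j, X j ω = x j) ∧ Z ω = z} else 0) * φ xi := by
            refine Finset.sum_congr rfl fun xi _ => ?_
            rw [hfib xi, Finset.sum_mul]
      _ = ∑ x : (∀ j, A j), ∑ xi : A i, (if x i = xi
              then pr μ {ω | (∀ j, X j ω = x j) ∧ Z ω = z} else 0) * φ xi :=
            Finset.sum_comm
      _ = ∑ x : (∀ j, A j), pr μ {ω | (∀ j, X j ω = x j) ∧ Z ω = z} * φ (x i) := by
            refine Finset.sum_congr rfl fun x _ => ?_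
            simp only [ite_mul, zero_mul]
            rw [Finset.sum_ite_eq]
            simp
    exact cp_lemC A (fun x z => pr μ {ω | (∀ i, X i ω = x i) ∧ Z ω = z})
      (fun z => pr μ {ω | Z ω = z})
      (fun i xi z => pr μ {ω | X i ω = xi ∧ Z ω = z})
      (fun x z => cp_pr_nonneg μ _)
      (fun x z => cp_pr_mono μ fun ω h => h.2)
      (fun x z i => cp_pr_mono μ fun ω h => ⟨h.1 i, h.2⟩)
      hm (fun x z hz => hmutual z hz x)
  -- Step 4: conditioning on Z reduces entropy
  have entE : entropy μ (fun ω => fun i => X i ω)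
      = -∑ x : (∀ i, A i), pr μ {ω | ∀ i, X i ω = x i} *
          Real.log (pr μ {ω | ∀ i, X i ω = x i}) := by
    rw [entropy]
    congr 1
    refine Finset.sum_congr rfl fun x _ => ?_
    have hset : {ω | (fun i => X i ω) = x} = {ω | ∀ i, X i ω = x i} := by
      ext ω; simp [funext_iff]
    rw [hset]
  have hgA : ∀ (x : ∀ i, A i), pr μ {ω | ∀ i, X i ω = x i}
      = ∑ z : E, pr μ {ω | (∀ i, X i ω = x i) ∧ Z ω = z} := by
    intro x
    rw [cp_pr_fiber μ Z hmZ (hmV' x)]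
    exact Finset.sum_congr rfl fun z _ => prcongr _ _ (by ext ω; simp)
  have hhA : ∀ (z : E), pr μ {ω | Z ω = z}
      = ∑ x : (∀ i, A i), pr μ {ω | (∀ i, X i ω = x i) ∧ Z ω = z} := by
    intro z
    rw [cp_pr_fiber μ (fun ω => fun i => X i ω) hmV (hmZ z)]
    refine Finset.sum_congr rfl fun x _ => prcongr _ _ ?_
    ext ω
    simp only [Set.mem_inter_iff, Set.mem_setOf_eq, funext_iff]
    tauto
  have htotA : ∑ x : (∀ i, A i), pr μ {ω | ∀ i, X i ω = x i} = 1 := by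
    calc ∑ x : (∀ i, A i), pr μ {ω | ∀ i, X i ω = x i}
        = ∑ x : (∀ i, A i), pr μ (Set.univ ∩ {ω | (fun i => X i ω) = x}) :=
          Finset.sum_congr rfl fun x _ =>
            prcongr _ _ (by ext ω; simp [funext_iff])
    _ = pr μ Set.univ := (cp_pr_fiber μ (fun ω => fun i => X i ω) hmV MeasurableSet.univ).symm
    _ = 1 := cp_pr_univ μ
  have stepA' := cp_lemA (fun (x : ∀ i, A i) (z : E) => pr μ {ω | (∀ i, X i ω = x i) ∧ Z ω = z})
      (fun (x : ∀ i, A i) => pr μ {ω | ∀ i, X i ω = x i})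
      (fun (z : E) => pr μ {ω | Z ω = z})
      (fun x z => cp_pr_nonneg μ _) hgA hhA htotA
  have stepA : -∑ x : (∀ i, A i), ∑ z : E, pr μ {ω | (∀ i, X i ω = x i) ∧ Z ω = z} *
        Real.log (pr μ {ω | (∀ i, X i ω = x i) ∧ Z ω = z} / pr μ {ω | Z ω = z})
      ≤ -∑ x : (∀ i, A i), pr μ {ω | ∀ i, X i ω = x i} *
          Real.log (pr μ {ω | ∀ i, X i ω = x i}) := stepA'
  calc ∑ i, condEntropy μ (X i) (D i)
      = ∑ i, (-∑ x : A i, ∑ d : B i, pr μ {ω | X i ω = x ∧ D i ω = d} *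
          Real.log (pr μ {ω | X i ω = x ∧ D i ω = d} / pr μ {ω | D i ω = d})) :=
        Finset.sum_congr rfl fun i _ => hcond i
  _ ≤ ∑ i, (-∑ x : A i, ∑ z : E, pr μ {ω | X i ω = x ∧ Z ω = z} *
          Real.log (pr μ {ω | X i ω = x ∧ Z ω = z} / pr μ {ω | Z ω = z})) :=
        Finset.sum_le_sum fun i _ => stepB i
  _ = -∑ x : (∀ i, A i), ∑ z : E, pr μ {ω | (∀ i, X i ω = x i) ∧ Z ω = z} *
          Real.log (pr μ {ω | (∀ i, X i ω = x i) ∧ Z ω = z} / pr μ {ω | Z ω = z}) := stepC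
  _ ≤ -∑ x : (∀ i, A i), pr μ {ω | ∀ i, X i ω = x i} *
          Real.log (pr μ {ω | ∀ i, X i ω = x i}) := stepA
  _ = entropy μ (fun ω => fun i => X i ω) := entE.symm
end

section
/- (Single fusion of the HT-model increases entropy.) Let U, V, W, Y be random variables on a probability space taking values in finite sets. Assume (i) U and V are conditionally independent given W, (ii) U and W are conditionally independent given Y, and (iii) V and W are conditionally independent given Y. Then H((U,V) | W) ≥ H(U | Y) + H(V | Y). -/
open MeasureTheory

set_option linter.unusedSectionVars false

section helpers
variable {Ω : Type*} [MeasurableSpace Ω] (μ : Measure Ω) [IsProbabilityMeasure μ]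

lemma pr_nonneg (s : Set Ω) : 0 ≤ pr μ s := ENNReal.toReal_nonneg

lemma pr_mono {s t : Set Ω} (h : s ⊆ t) : pr μ s ≤ pr μ t :=
  ENNReal.toReal_mono (measure_ne_top μ t) (measure_mono h)

lemma pr_congr {s t : Set Ω} (h : ∀ ω, ω ∈ s ↔ ω ∈ t) : pr μ s = pr μ t := by
  rw [Set.ext h]

lemma pr_sum_fiber {C : Type*} [Fintype C] [MeasurableSpace C] [MeasurableSingletonClass C]
    (g : Ω → C) (hg : Measurable g) {s : Set Ω} (hs : MeasurableSet s) :
    pr μ s = ∑ c : C, pr μ (s ∩ {ω | g ω = c}) := by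
  have hset : s = ⋃ c, s ∩ {ω | g ω = c} := by
    ext ω; simp
  have hdisj : Pairwise (Function.onFun Disjoint fun c => s ∩ {ω | g ω = c}) := by
    intro c c' hne
    refine Set.disjoint_left.2 ?_
    rintro ω ⟨-, h1⟩ ⟨-, h2⟩
    exact hne ((h1 : g ω = c) ▸ (h2 : g ω = c'))
  have hmeas : ∀ c : C, MeasurableSet (s ∩ {ω | g ω = c}) := fun c =>
    hs.inter (hg (measurableSet_singleton c))
  conv_lhs => rw [pr, hset, measure_iUnion hdisj hmeas, tsum_fintype,
    ENNReal.toReal_sum (fun c _ => measure_ne_top μ _)]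
  rfl

lemma pr_split {C : Type*} [Fintype C] [MeasurableSpace C] [MeasurableSingletonClass C]
    (g : Ω → C) (hg : Measurable g) (P : Ω → Prop) (hP : MeasurableSet {ω | P ω}) :
    pr μ {ω | P ω} = ∑ c : C, pr μ {ω | P ω ∧ g ω = c} := by
  rw [pr_sum_fiber μ g hg hP]
  exact Finset.sum_congr rfl fun c _ => pr_congr μ fun ω => Iff.rfl

lemma condEntropy_eq {A B : Type*} [Fintype A] [Fintype B] (X : Ω → A) (Y : Ω → B) :
    condEntropy μ X Y = ∑ y : B, ∑ x : A, pr μ {ω | Y ω = y} *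
      Real.negMulLog (pr μ {ω | X ω = x ∧ Y ω = y} / pr μ {ω | Y ω = y}) := by
  unfold condEntropy
  refine Finset.sum_congr rfl fun y _ => ?_
  rw [mul_neg, Finset.mul_sum, ← Finset.sum_neg_distrib]
  exact Finset.sum_congr rfl fun x _ => by rw [Real.negMulLog]; ring

/-- Conditioning on a coarser variable (data processing): if `X ⊥ W | Y` then
`H(X|Y) ≤ H(X|W)`. -/
lemma condEntropy_mono {C G D : Type*}
    [Fintype C] [MeasurableSpace C] [MeasurableSingletonClass C]
    [Fintype G] [MeasurableSpace G] [MeasurableSingletonClass G]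
    [Fintype D] [MeasurableSpace D] [MeasurableSingletonClass D]
    (X : Ω → C) (W : Ω → G) (Y : Ω → D)
    (hX : Measurable X) (hW : Measurable W) (hY : Measurable Y)
    (hind : ∀ (x : C) (w : G) (y : D), 0 < pr μ {ω | Y ω = y} →
      pr μ {ω | (X ω = x ∧ W ω = w) ∧ Y ω = y} / pr μ {ω | Y ω = y} =
        (pr μ {ω | X ω = x ∧ Y ω = y} / pr μ {ω | Y ω = y}) *
        (pr μ {ω | W ω = w ∧ Y ω = y} / pr μ {ω | Y ω = y})) :
    condEntropy μ X Y ≤ condEntropy μ X W := by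
  rw [condEntropy_eq, condEntropy_eq]
  have key : ∀ (x : C) (w : G),
      ∑ y : D, pr μ {ω | W ω = w ∧ Y ω = y} *
          Real.negMulLog (pr μ {ω | X ω = x ∧ Y ω = y} / pr μ {ω | Y ω = y})
        ≤ pr μ {ω | W ω = w} *
          Real.negMulLog (pr μ {ω | X ω = x ∧ W ω = w} / pr μ {ω | W ω = w}) := by
    intro x w
    rcases eq_or_lt_of_le (pr_nonneg μ {ω | W ω = w}) with h0 | hpos
    · have hz : ∀ y : D, pr μ {ω | W ω = w ∧ Y ω = y} = 0 := fun y =>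
        le_antisymm (h0 ▸ pr_mono μ fun ω h => h.1) (pr_nonneg μ _)
      simp [hz, ← h0]
    · have hpw0 : pr μ {ω | W ω = w} ≠ 0 := ne_of_gt hpos
      have hsum : ∑ y : D, pr μ {ω | W ω = w ∧ Y ω = y} = pr μ {ω | W ω = w} := by
        rw [pr_split μ Y hY (fun ω => W ω = w) (hW (measurableSet_singleton w))]
      have jens := Real.concaveOn_negMulLog.le_map_sum (t := (Finset.univ : Finset D))
        (w := fun y : D => pr μ {ω | W ω = w ∧ Y ω = y} / pr μ {ω | W ω = w})
        (p := fun y : D => pr μ {ω | X ω = x ∧ Y ω = y} / pr μ {ω | Y ω = y})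
        (fun y _ => div_nonneg (pr_nonneg μ _) hpos.le)
        (by rw [← Finset.sum_div, hsum, div_self hpw0])
        (fun y _ => Set.mem_Ici.mpr (div_nonneg (pr_nonneg μ _) (pr_nonneg μ _)))
      simp only [smul_eq_mul] at jens
      have hterm : ∀ y : D,
          pr μ {ω | W ω = w ∧ Y ω = y} / pr μ {ω | W ω = w} *
            (pr μ {ω | X ω = x ∧ Y ω = y} / pr μ {ω | Y ω = y})
          = pr μ {ω | (X ω = x ∧ W ω = w) ∧ Y ω = y} / pr μ {ω | W ω = w} := by
        intro y
        rcases eq_or_lt_of_le (pr_nonneg μ {ω | Y ω = y}) with hy0 | hy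
        · have h1 : pr μ {ω | X ω = x ∧ Y ω = y} = 0 :=
            le_antisymm (hy0 ▸ pr_mono μ fun ω h => h.2) (pr_nonneg μ _)
          have h2 : pr μ {ω | (X ω = x ∧ W ω = w) ∧ Y ω = y} = 0 :=
            le_antisymm (hy0 ▸ pr_mono μ fun ω h => h.2) (pr_nonneg μ _)
          rw [h1, h2]; simp
        · have h := hind x w y hy
          have hy0 : pr μ {ω | Y ω = y} ≠ 0 := ne_of_gt hy
          field_simp at h
          have h2 : (pr μ {ω | (X ω = x ∧ W ω = w) ∧ Y ω = y} * pr μ {ω | Y ω = y}) *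
              pr μ {ω | Y ω = y} =
              (pr μ {ω | X ω = x ∧ Y ω = y} * pr μ {ω | W ω = w ∧ Y ω = y}) *
              pr μ {ω | Y ω = y} := by linear_combination pr μ {ω | Y ω = y} * h
          have hc := mul_right_cancel₀ hy0 h2
          rw [div_mul_div_comm, div_eq_div_iff (mul_ne_zero hpw0 hy0) hpw0]
          linear_combination (-pr μ {ω | W ω = w}) * hc
      have harg : ∑ y : D,
          pr μ {ω | W ω = w ∧ Y ω = y} / pr μ {ω | W ω = w} *
            (pr μ {ω | X ω = x ∧ Y ω = y} / pr μ {ω | Y ω = y})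
          = pr μ {ω | X ω = x ∧ W ω = w} / pr μ {ω | W ω = w} := by
        rw [Finset.sum_congr rfl fun y _ => hterm y, ← Finset.sum_div]
        congr 1
        exact (pr_split μ Y hY (fun ω => X ω = x ∧ W ω = w)
          ((hX (measurableSet_singleton x)).inter (hW (measurableSet_singleton w)))).symm
      rw [harg] at jens
      have hmul := mul_le_mul_of_nonneg_left jens hpos.le
      rw [Finset.mul_sum] at hmul
      refine le_trans (le_of_eq ?_) hmul
      refine Finset.sum_congr rfl fun y _ => ?_
      field_simp
  have expand : ∀ y : D,
      pr μ {ω | Y ω = y} = ∑ w : G, pr μ {ω | W ω = w ∧ Y ω = y} := by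
    intro y
    rw [pr_split μ W hW (fun ω => Y ω = y) (hY (measurableSet_singleton y))]
    exact Finset.sum_congr rfl fun w _ => pr_congr μ fun ω => and_comm
  have swap : ∀ (f : C → D → ℝ),
      (∑ y : D, ∑ x : C, pr μ {ω | Y ω = y} * f x y)
        = ∑ w : G, ∑ x : C, ∑ y : D, pr μ {ω | W ω = w ∧ Y ω = y} * f x y := by
    intro f
    calc ∑ y : D, ∑ x : C, pr μ {ω | Y ω = y} * f x y
        = ∑ y : D, ∑ x : C, ∑ w : G, pr μ {ω | W ω = w ∧ Y ω = y} * f x y := by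
          refine Finset.sum_congr rfl fun y _ => Finset.sum_congr rfl fun x _ => ?_
          rw [expand y, Finset.sum_mul]
      _ = ∑ x : C, ∑ y : D, ∑ w : G, pr μ {ω | W ω = w ∧ Y ω = y} * f x y :=
          Finset.sum_comm
      _ = ∑ x : C, ∑ w : G, ∑ y : D, pr μ {ω | W ω = w ∧ Y ω = y} * f x y :=
          Finset.sum_congr rfl fun x _ => Finset.sum_comm
      _ = ∑ w : G, ∑ x : C, ∑ y : D, pr μ {ω | W ω = w ∧ Y ω = y} * f x y :=
          Finset.sum_comm
  rw [swap (fun x y => Real.negMulLog (pr μ {ω | X ω = x ∧ Y ω = y} / pr μ {ω | Y ω = y}))]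
  exact Finset.sum_le_sum fun w _ => Finset.sum_le_sum fun x _ => key x w

end helpers

section chain
variable {Ω : Type*} [MeasurableSpace Ω] (μ : Measure Ω) [IsProbabilityMeasure μ]

lemma condEntropy_pair {A B G : Type*}
    [Fintype A] [MeasurableSpace A] [MeasurableSingletonClass A]
    [Fintype B] [MeasurableSpace B] [MeasurableSingletonClass B]
    [Fintype G] [MeasurableSpace G] [MeasurableSingletonClass G]
    (U : Ω → A) (V : Ω → B) (W : Ω → G)
    (hU : Measurable U) (hV : Measurable V) (hW : Measurable W)
    (hUV_W : ∀ (u : A) (v : B) (w : G), 0 < pr μ {ω | W ω = w} →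
      pr μ {ω | (U ω = u ∧ V ω = v) ∧ W ω = w} / pr μ {ω | W ω = w} =
        (pr μ {ω | U ω = u ∧ W ω = w} / pr μ {ω | W ω = w}) *
        (pr μ {ω | V ω = v ∧ W ω = w} / pr μ {ω | W ω = w})) :
    condEntropy μ (fun ω => (U ω, V ω)) W = condEntropy μ U W + condEntropy μ V W := by
  rw [condEntropy_eq, condEntropy_eq, condEntropy_eq, ← Finset.sum_add_distrib]
  refine Finset.sum_congr rfl fun w _ => ?_
  rcases eq_or_lt_of_le (pr_nonneg μ {ω | W ω = w}) with h0 | hpos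
  · simp [← h0]
  · have hpw0 : pr μ {ω | W ω = w} ≠ 0 := ne_of_gt hpos
    have hsU : ∑ u : A, pr μ {ω | U ω = u ∧ W ω = w} / pr μ {ω | W ω = w} = 1 := by
      rw [← Finset.sum_div, div_eq_one_iff_eq hpw0]
      rw [pr_split μ U hU (fun ω => W ω = w) (hW (measurableSet_singleton w))]
      exact Finset.sum_congr rfl fun u _ => pr_congr μ fun ω => and_comm
    have hsV : ∑ v : B, pr μ {ω | V ω = v ∧ W ω = w} / pr μ {ω | W ω = w} = 1 := by
      rw [← Finset.sum_div, div_eq_one_iff_eq hpw0]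
      rw [pr_split μ V hV (fun ω => W ω = w) (hW (measurableSet_singleton w))]
      exact Finset.sum_congr rfl fun v _ => pr_congr μ fun ω => and_comm
    rw [Fintype.sum_prod_type]
    have main : ∀ (u : A) (v : B),
        pr μ {ω | W ω = w} *
          Real.negMulLog (pr μ {ω | (U ω, V ω) = (u, v) ∧ W ω = w} / pr μ {ω | W ω = w})
        = (pr μ {ω | V ω = v ∧ W ω = w} / pr μ {ω | W ω = w}) *
            (pr μ {ω | W ω = w} *
              Real.negMulLog (pr μ {ω | U ω = u ∧ W ω = w} / pr μ {ω | W ω = w}))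
          + (pr μ {ω | U ω = u ∧ W ω = w} / pr μ {ω | W ω = w}) *
            (pr μ {ω | W ω = w} *
              Real.negMulLog (pr μ {ω | V ω = v ∧ W ω = w} / pr μ {ω | W ω = w})) := by
      intro u v
      have hset : pr μ {ω | (U ω, V ω) = (u, v) ∧ W ω = w}
          = pr μ {ω | (U ω = u ∧ V ω = v) ∧ W ω = w} :=
        pr_congr μ fun ω => by simp [Prod.ext_iff]
      rw [hset, hUV_W u v w hpos, Real.negMulLog_mul]
      ring
    calc ∑ u : A, ∑ v : B, pr μ {ω | W ω = w} *
          Real.negMulLog (pr μ {ω | (U ω, V ω) = (u, v) ∧ W ω = w} / pr μ {ω | W ω = w})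
        = ∑ u : A, ∑ v : B,
            ((pr μ {ω | V ω = v ∧ W ω = w} / pr μ {ω | W ω = w}) *
              (pr μ {ω | W ω = w} *
                Real.negMulLog (pr μ {ω | U ω = u ∧ W ω = w} / pr μ {ω | W ω = w}))
            + (pr μ {ω | U ω = u ∧ W ω = w} / pr μ {ω | W ω = w}) *
              (pr μ {ω | W ω = w} *
                Real.negMulLog (pr μ {ω | V ω = v ∧ W ω = w} / pr μ {ω | W ω = w}))) :=
          Finset.sum_congr rfl fun u _ => Finset.sum_congr rfl fun v _ => main u v
      _ = ∑ u : A, pr μ {ω | W ω = w} *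
            Real.negMulLog (pr μ {ω | U ω = u ∧ W ω = w} / pr μ {ω | W ω = w})
          + ∑ v : B, pr μ {ω | W ω = w} *
            Real.negMulLog (pr μ {ω | V ω = v ∧ W ω = w} / pr μ {ω | W ω = w}) := by
          simp_rw [Finset.sum_add_distrib]
          congr 1
          · refine Finset.sum_congr rfl fun u _ => ?_
            rw [← Finset.sum_mul, hsV, one_mul]
          · rw [Finset.sum_comm]
            refine Finset.sum_congr rfl fun v _ => ?_
            rw [← Finset.sum_mul, hsU, one_mul]

end chain

/-- A single fusion of the HT-model increases entropy. If `U` and `V` are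
conditionally independent given `W`, `U` and `W` are conditionally independent given `Y`,
and `V` and `W` are conditionally independent given `Y`, then
`H((U,V) | W) ≥ H(U | Y) + H(V | Y)`. -/
theorem ht_fusion_entropy_increases {Ω A B G D : Type*} [MeasurableSpace Ω]
    (μ : Measure Ω) [IsProbabilityMeasure μ]
    [Fintype A] [MeasurableSpace A] [MeasurableSingletonClass A]
    [Fintype B] [MeasurableSpace B] [MeasurableSingletonClass B]
    [Fintype G] [MeasurableSpace G] [MeasurableSingletonClass G]
    [Fintype D] [MeasurableSpace D] [MeasurableSingletonClass D]
    (U : Ω → A) (V : Ω → B) (W : Ω → G) (Y : Ω → D)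
    (hU : Measurable U) (hV : Measurable V) (hW : Measurable W) (hY : Measurable Y)
    (hUV_W : ∀ (u : A) (v : B) (w : G), 0 < pr μ {ω | W ω = w} →
      pr μ {ω | (U ω = u ∧ V ω = v) ∧ W ω = w} / pr μ {ω | W ω = w} =
        (pr μ {ω | U ω = u ∧ W ω = w} / pr μ {ω | W ω = w}) *
        (pr μ {ω | V ω = v ∧ W ω = w} / pr μ {ω | W ω = w}))
    (hUW_Y : ∀ (u : A) (w : G) (y : D), 0 < pr μ {ω | Y ω = y} →
      pr μ {ω | (U ω = u ∧ W ω = w) ∧ Y ω = y} / pr μ {ω | Y ω = y} =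
        (pr μ {ω | U ω = u ∧ Y ω = y} / pr μ {ω | Y ω = y}) *
        (pr μ {ω | W ω = w ∧ Y ω = y} / pr μ {ω | Y ω = y}))
    (hVW_Y : ∀ (v : B) (w : G) (y : D), 0 < pr μ {ω | Y ω = y} →
      pr μ {ω | (V ω = v ∧ W ω = w) ∧ Y ω = y} / pr μ {ω | Y ω = y} =
        (pr μ {ω | V ω = v ∧ Y ω = y} / pr μ {ω | Y ω = y}) *
        (pr μ {ω | W ω = w ∧ Y ω = y} / pr μ {ω | Y ω = y})) :
    condEntropy μ U Y + condEntropy μ V Y ≤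
      condEntropy μ (fun ω => (U ω, V ω)) W := by
  have h1 : condEntropy μ U Y ≤ condEntropy μ U W :=
    condEntropy_mono μ U W Y hU hW hY hUW_Y
  have h2 : condEntropy μ V Y ≤ condEntropy μ V W :=
    condEntropy_mono μ V W Y hV hW hY hVW_Y
  have h3 := condEntropy_pair μ U V W hU hV hW hUV_W
  linarith
end
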